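/- arXiv:1809.10123 — 2 statements merged into one kernel-verified Lean document; each statement's English description precedes it below -/
import Mathlib

section
/- Let d ≥ 1 and let μ_1, …, μ_d : [0,T] → (0,1] be continuous with Σ_{i=1}^d μ_i(t) = 1 for every t ∈ [0,T]; let M_i(t) := max_{0 ≤ s ≤ t} μ_i(s). Let p ≥ 1 satisfy −Σ_{i=1}^d μ_i(t) log( p M_i(t) ) ≥ 0 for all t ∈ [0,T], and define V(t) := −Σ_{i=1}^d μ_i(t) log( p M_i(t) ) + Σ_{i=1}^d M_i(t) − 1. Fix 0 < T* ≤ T and assume Σ_{i=1}^d M_i(T*) > 1 − Σ_{i=1}^d μ_i(0) log( p μ_i(0) ). Then V(t) ≥ 0 for all t ∈ [0,T], and V(t) > V(0) = −Σ_{i=1}^d μ_i(0) log( p μ_i(0) ) for every t ∈ [T*, T]. (Example 6.2: the strategy additively generated by the entropy functional with running maximum is strong arbitrage relative to the market over every horizon [0,t] with T* ≤ t ≤ T.) -/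
/-- The running maximum of `f` on `[0, t]`. -/
noncomputable def runMax (f : ℝ → ℝ) (t : ℝ) : ℝ :=
  sSup (f '' Set.Icc (0:ℝ) t)

/-- Example 6.2: the strategy additively generated by the entropy functional
with running maximum, `G(t, μ, μ*) = −log p − Σ_i μ_i(t) log μ*_i(t)`, with
value process `V = G + Γ^G` where `Γ^G(t) = Σ_i μ*_i(t) − 1`, is strong
arbitrage relative to the market over every horizon `[0,t]` with `T* ≤ t ≤ T`. -/
theorem entropy_with_running_maximum_arbitrage
    (T Tstar : ℝ) (hTstar : 0 < Tstar) (hTstarT : Tstar ≤ T)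
    (d : ℕ) (hd : 1 ≤ d) (w : Fin d → ℝ → ℝ)
    (hw_cont : ∀ i, ContinuousOn (w i) (Set.Icc (0:ℝ) T))
    (hw_mem : ∀ i, ∀ t ∈ Set.Icc (0:ℝ) T, w i t ∈ Set.Ioc (0:ℝ) 1)
    (hw_sum : ∀ t ∈ Set.Icc (0:ℝ) T, ∑ i, w i t = 1)
    (M : Fin d → ℝ → ℝ) (hM : ∀ i t, M i t = runMax (w i) t)
    (p : ℝ) (hp : 1 ≤ p)
    (hGnonneg : ∀ t ∈ Set.Icc (0:ℝ) T,
      0 ≤ -∑ i, w i t * Real.log (p * M i t))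
    (V : ℝ → ℝ)
    (hV : ∀ t, V t = (-∑ i, w i t * Real.log (p * M i t)) + (∑ i, M i t) - 1)
    (harb : ∑ i, M i Tstar > 1 - ∑ i, w i 0 * Real.log (p * w i 0)) :
    (∀ t ∈ Set.Icc (0:ℝ) T, 0 ≤ V t) ∧
      V 0 = -∑ i, w i 0 * Real.log (p * w i 0) ∧
      ∀ t ∈ Set.Icc Tstar T, V 0 < V t := by
  have hsub : ∀ t : ℝ, t ≤ T → Set.Icc (0:ℝ) t ⊆ Set.Icc 0 T :=
    fun t ht => Set.Icc_subset_Icc le_rfl ht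
  have hbdd : ∀ i, ∀ t : ℝ, t ≤ T → BddAbove (w i '' Set.Icc (0:ℝ) t) := by
    intro i t ht
    exact ⟨1, fun x ⟨s, hs, hx⟩ => hx ▸ (hw_mem i s (hsub t ht hs)).2⟩
  have hle : ∀ i, ∀ t ∈ Set.Icc (0:ℝ) T, w i t ≤ M i t := by
    intro i t ht
    rw [hM]
    exact le_csSup (hbdd i t ht.2) ⟨t, ⟨ht.1, le_rfl⟩, rfl⟩
  have hsumM : ∀ t ∈ Set.Icc (0:ℝ) T, 1 ≤ ∑ i, M i t := by
    intro t ht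
    calc (1:ℝ) = ∑ i, w i t := (hw_sum t ht).symm
    _ ≤ ∑ i, M i t := Finset.sum_le_sum (fun i _ => hle i t ht)
  have hM0 : ∀ i, M i 0 = w i 0 := by
    intro i; rw [hM, runMax, Set.Icc_self, Set.image_singleton, csSup_singleton]
  have h0T : (0:ℝ) ∈ Set.Icc (0:ℝ) T := ⟨le_rfl, hTstar.le.trans hTstarT⟩
  have hV0 : V 0 = -∑ i, w i 0 * Real.log (p * w i 0) := by
    rw [hV]
    simp only [hM0]
    rw [hw_sum 0 h0T]; ring
  have hVnn : ∀ t ∈ Set.Icc (0:ℝ) T, 0 ≤ V t := by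
    intro t ht
    rw [hV]
    have h1 := hGnonneg t ht
    have h2 := hsumM t ht
    linarith
  refine ⟨hVnn, hV0, ?_⟩
  intro t ht
  have htT : t ∈ Set.Icc (0:ℝ) T := ⟨hTstar.le.trans ht.1, ht.2⟩
  have hmono : ∀ i, M i Tstar ≤ M i t := by
    intro i
    rw [hM, hM, runMax, runMax]
    refine csSup_le_csSup (hbdd i t htT.2) ⟨w i 0, ⟨0, ⟨le_rfl, hTstar.le⟩, rfl⟩⟩
      (Set.image_mono (Set.Icc_subset_Icc le_rfl ht.1))
  have hsum : ∑ i, M i Tstar ≤ ∑ i, M i t := Finset.sum_le_sum fun i _ => hmono i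
  have hG := hGnonneg t htT
  rw [hV0, hV]
  linarith
end

section
/- Let r > 0, T > 0, and let f : ℝ → ℝ be continuous with 0 < f(t) ≤ 1/(r e) for all t ∈ [0,T]. Let m be the running minimum of f on [0,T], extended constantly outside [0,T], with Lebesgue–Stieltjes measure μ_{−m} of the nondecreasing function −m, and let li_r(x) := ∫_0^x du/log(ru). Then for every t ∈ [0,T]: ∫_{(0,t]} ( 1 + 1/log( r m(s) ) ) dμ_{−m}(s) = ( m(0) − m(t) ) + ( li_r(m(0)) − li_r(m(t)) ). Moreover, the integrand satisfies 0 ≤ 1 + 1/log(r m(s)) ≤ 1 for all s, so the function t ↦ ( m(t) − m(0) ) + ( li_r(m(t)) − li_r(m(0)) ) is nonincreasing in t. -/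
open MeasureTheory Set Filter

/-- The running minimum of `f` on `[0, T]`, extended constantly outside `[0, T]`. -/
noncomputable def runMin (f : ℝ → ℝ) (T t : ℝ) : ℝ :=
  sInf (f '' Set.Icc (0:ℝ) (max 0 (min t T)))

/-- `li_r(x) := ∫_0^x du / log(ru)`. -/
noncomputable def lir (r x : ℝ) : ℝ :=
  ∫ u in (0:ℝ)..x, (Real.log (r * u))⁻¹

lemma runMin_attained (f : ℝ → ℝ) (hf : Continuous f) (T : ℝ) (hT : 0 ≤ T) (t : ℝ) :
    ∃ x ∈ Set.Icc (0:ℝ) T, runMin f T t = f x := by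
  have h0 : (0:ℝ) ≤ max 0 (min t T) := le_max_left _ _
  obtain ⟨x, hx, hx2⟩ := (isCompact_Icc (a := (0:ℝ)) (b := max 0 (min t T))).exists_sInf_image_eq
    (Set.nonempty_Icc.2 h0) hf.continuousOn
  refine ⟨x, ⟨hx.1, hx.2.trans ?_⟩, hx2⟩
  exact max_le hT (min_le_right _ _)

lemma runMin_anti (f : ℝ → ℝ) (hf : Continuous f) (T : ℝ) : Antitone (runMin f T) := by
  intro t1 t2 h
  apply csInf_le_csInf
  · exact ((isCompact_Icc.image hf).bddBelow)
  · exact (Set.nonempty_Icc.2 (le_max_left _ _)).image f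
  · exact Set.image_mono (f := f) (Set.Icc_subset_Icc le_rfl (max_le_max le_rfl (min_le_min_right _ h)))

lemma clamp_lip (t x T : ℝ) : |max 0 (min t T) - max 0 (min x T)| ≤ |t - x| := by
  have h1 : |max (min t T) 0 - max (min x T) 0| ≤ |min t T - min x T| :=
    abs_max_sub_max_le_abs _ _ _
  have h2 : |min t T - min x T| ≤ |t - x| := by
    rcases le_total t T with h | h <;> rcases le_total x T with h' | h' <;>
      simp only [min_eq_left, min_eq_right, *]
    · exact abs_le.2 ⟨by linarith [neg_abs_le (t - x)], by linarith [le_abs_self (t - x)]⟩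
    · exact abs_le.2 ⟨by linarith [neg_abs_le (t - x)], by linarith [abs_nonneg (t - x)]⟩
    · exact abs_le.2 ⟨by linarith [abs_nonneg (t - x)], by linarith [le_abs_self (t - x)]⟩
    · simpa using abs_nonneg (t - x)
  calc |max 0 (min t T) - max 0 (min x T)| = |max (min t T) 0 - max (min x T) 0| := by
        rw [max_comm, max_comm (min x T) 0]
    _ ≤ |t - x| := h1.trans h2

lemma runMin_cont (f : ℝ → ℝ) (hf : Continuous f) (T : ℝ) (hT : 0 ≤ T) :
    Continuous (runMin f T) := by
  have hclamp : Continuous (fun t : ℝ => max 0 (min t T)) :=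
    continuous_const.max (continuous_id.min continuous_const)
  have hmem : ∀ t : ℝ, max 0 (min t T) ∈ Set.Icc (0:ℝ) T :=
    fun t => ⟨le_max_left _ _, max_le hT (min_le_right _ _)⟩
  -- M c := sInf (f '' Icc 0 c), continuous on [0,T]
  set M : ℝ → ℝ := fun c => sInf (f '' Set.Icc (0:ℝ) c) with hM
  have key : ∀ ε > 0, ∃ δ > 0, ∀ c ∈ Set.Icc (0:ℝ) T, ∀ c' ∈ Set.Icc (0:ℝ) T,
      c ≤ c' → c' - c < δ → M c - M c' ≤ ε := by
    intro ε hε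
    have hu := isCompact_Icc (a := (0:ℝ)) (b := T) |>.uniformContinuousOn_of_continuous
      hf.continuousOn
    rw [Metric.uniformContinuousOn_iff] at hu
    obtain ⟨δ, hδ, hδ2⟩ := hu ε hε
    refine ⟨δ, hδ, fun c hc c' hc' hle hlt => ?_⟩
    obtain ⟨x, hx, hx2⟩ := (isCompact_Icc (a := (0:ℝ)) (b := c')).exists_sInf_image_eq
      (Set.nonempty_Icc.2 (hc.1.trans hle)) hf.continuousOn
    rcases le_or_gt x c with hxc | hxc
    · have : M c ≤ f x := csInf_le (isCompact_Icc.image hf).bddBelow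
        (Set.mem_image_of_mem f ⟨hx.1, hxc⟩)
      rw [hM]; simp only; rw [hx2] at *; linarith
    · have hxT : x ∈ Set.Icc (0:ℝ) T := ⟨hx.1, hx.2.trans hc'.2⟩
      have hdist : dist x c < δ := by
        rw [Real.dist_eq, abs_of_nonneg (by linarith)]; linarith [hx.2]
      have h1 : dist (f x) (f c) < ε := hδ2 x hxT c hc hdist
      have h2 : M c ≤ f c := csInf_le (isCompact_Icc.image hf).bddBelow
        (Set.mem_image_of_mem f ⟨hc.1, le_rfl⟩)
      rw [Real.dist_eq] at h1
      have := abs_lt.1 h1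
      rw [hM]; simp only; rw [hx2]; linarith [this.1, this.2]
  have hManti : ∀ c c' : ℝ, 0 ≤ c → c ≤ c' → M c' ≤ M c := by
    intro c c' h0 h
    exact csInf_le_csInf (isCompact_Icc.image hf).bddBelow
      ((Set.nonempty_Icc.2 h0).image f)
      (Set.image_mono (f := f) (Set.Icc_subset_Icc le_rfl h))
  rw [Metric.continuous_iff]
  intro x ε hε
  obtain ⟨δ, hδ, hkey⟩ := key (ε/2) (by linarith)
  refine ⟨δ, hδ, fun t ht => ?_⟩
  have hrt : runMin f T t = M (max 0 (min t T)) := rfl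
  have hrx : runMin f T x = M (max 0 (min x T)) := rfl
  have hd : |max 0 (min t T) - max 0 (min x T)| < δ :=
    lt_of_le_of_lt (clamp_lip t x T) (by rwa [Real.dist_eq] at ht)
  rw [Real.dist_eq, hrt, hrx]
  rcases le_total (max 0 (min t T)) (max 0 (min x T)) with hc | hc
  · have h1 := hkey _ (hmem t) _ (hmem x) hc (by rw [abs_of_nonpos (by linarith)] at hd; linarith)
    have h2 : M (max 0 (min x T)) ≤ M (max 0 (min t T)) := hManti _ _ (hmem t).1 hc
    rw [abs_of_nonneg (by linarith)]; linarith
  · have h1 := hkey _ (hmem x) _ (hmem t) hc (by rw [abs_of_nonneg (by linarith)] at hd; linarith)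
    have h2 : M (max 0 (min t T)) ≤ M (max 0 (min x T)) := hManti _ _ (hmem x).1 hc
    rw [abs_of_nonpos (by linarith)]; linarith



lemma no_atoms (m : ℝ → ℝ) (hmc : Continuous m) (μ : Measure ℝ)
    (hμ : ∀ a b : ℝ, a ≤ b → μ (Set.Ioc a b) = ENNReal.ofReal (m a - m b)) (x : ℝ) :
    μ {x} = 0 := by
  have h1 : ∀ ε : ℝ, 0 < ε → μ {x} ≤ ENNReal.ofReal (m (x - ε) - m x) := by
    intro ε hε
    rw [← hμ (x - ε) x (by linarith)]
    refine measure_mono ?_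
    intro y hy
    simp only [Set.mem_singleton_iff] at hy
    subst hy
    exact ⟨by linarith, le_rfl⟩
  have h2 : Tendsto (fun ε : ℝ => ENNReal.ofReal (m (x - ε) - m x))
      (nhdsWithin 0 (Set.Ioi 0)) (nhds 0) := by
    have h3 : Tendsto (fun ε : ℝ => m (x - ε) - m x) (nhds 0) (nhds 0) := by
      have hcont : Continuous (fun ε : ℝ => m (x - ε) - m x) :=
        (hmc.comp (continuous_const.sub continuous_id)).sub continuous_const
      have := hcont.tendsto 0
      simpa using this
    have := (ENNReal.continuous_ofReal.tendsto 0).comp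
      (h3.mono_left (nhdsWithin_le_nhds (s := Set.Ioi 0)))
    simpa [Function.comp_def] using this
  have : μ {x} ≤ 0 := by
    refine ge_of_tendsto h2 ?_
    filter_upwards [self_mem_nhdsWithin] with ε hε
    exact h1 ε hε
  exact le_antisymm this (by simp)

lemma map_runMin (m : ℝ → ℝ) (hmc : Continuous m) (hma : Antitone m) (μ : Measure ℝ)
    (hμ : ∀ a b : ℝ, a ≤ b → μ (Set.Ioc a b) = ENNReal.ofReal (m a - m b))
    {t : ℝ} (ht : 0 ≤ t) :
    Measure.map m (μ.restrict (Set.Ioc 0 t)) = volume.restrict (Set.Ioc (m t) (m 0)) := by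
  have hatom : ∀ x : ℝ, μ {x} = 0 := no_atoms m hmc μ hμ
  have hIcc : ∀ u v : ℝ, u ≤ v → μ (Set.Icc u v) = ENNReal.ofReal (m u - m v) := by
    intro u v huv
    have h1 : μ (Set.Icc u v) ≤ μ (Set.Ioc u v) + μ {u} := by
      refine (measure_mono ?_).trans (measure_union_le _ _)
      intro y hy
      rcases eq_or_lt_of_le hy.1 with h | h
      · exact Or.inr (by simp [← h])
      · exact Or.inl ⟨h, hy.2⟩
    rw [hatom, add_zero] at h1
    rw [le_antisymm h1 (measure_mono Set.Ioc_subset_Icc_self), hμ u v huv]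
  have hsand : ∀ (u v : ℝ) (S : Set ℝ), u ≤ v → Set.Ioo u v ⊆ S → S ⊆ Set.Icc u v →
      μ S = ENNReal.ofReal (m u - m v) := by
    intro u v S huv h1 h2
    have hge : μ (Set.Icc u v) ≤ μ (Set.Ioo u v) + (μ {u} + μ {v}) := by
      refine (measure_mono ?_).trans
        ((measure_union_le _ _).trans (add_le_add le_rfl (measure_union_le _ _)))
      intro y hy
      by_cases hyu : y = u
      · exact Or.inr (Or.inl (by simp [hyu]))
      by_cases hyv : y = v
      · exact Or.inr (Or.inr (by simp [hyv]))
      · exact Or.inl ⟨lt_of_le_of_ne hy.1 (Ne.symm hyu), lt_of_le_of_ne hy.2 hyv⟩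
    rw [hatom, hatom, add_zero, add_zero] at hge
    have hup : μ S ≤ ENNReal.ofReal (m u - m v) := by
      rw [← hIcc u v huv]; exact measure_mono h2
    have hdown : ENNReal.ofReal (m u - m v) ≤ μ S := by
      rw [← hIcc u v huv]; exact hge.trans (measure_mono h1)
    exact le_antisymm hup hdown
  refine Measure.ext_of_Ioc' _ _ (fun a b hab => ?_) (fun a b hab => ?_)
  · rw [Measure.map_apply hmc.measurable measurableSet_Ioc]
    refine ne_of_lt (lt_of_le_of_lt (measure_mono (Set.subset_univ _)) ?_)
    rw [Measure.restrict_apply_univ, hμ 0 t ht]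
    exact ENNReal.ofReal_lt_top
  rw [Measure.map_apply hmc.measurable measurableSet_Ioc,
    Measure.restrict_apply (hmc.measurable measurableSet_Ioc),
    Measure.restrict_apply measurableSet_Ioc]
  set A := m t with hA
  set B := m 0 with hB
  have hAB : A ≤ B := hma ht
  have hPgen : ∀ c : ℝ, A ≤ c → ∃ u : ℝ, u ∈ Set.Icc 0 t ∧ m u = min c B ∧
      (∀ s ∈ Set.Icc (0:ℝ) t, (m s ≤ c ↔ u ≤ s)) := by
    intro c hc
    set P := Set.Icc (0:ℝ) t ∩ m ⁻¹' Set.Iic c with hP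
    have hPne : P.Nonempty := ⟨t, ⟨ht, le_rfl⟩, hc⟩
    have hPbdd : BddBelow P := ⟨0, fun s hs => hs.1.1⟩
    have hPclosed : IsClosed P :=
      isClosed_Icc.inter (IsClosed.preimage hmc isClosed_Iic)
    have huP : sInf P ∈ P := hPclosed.csInf_mem hPne hPbdd
    refine ⟨sInf P, huP.1, ?_, fun s hs => ⟨fun h => csInf_le hPbdd ⟨hs, h⟩,
      fun h => le_trans (hma h) huP.2⟩⟩
    refine le_antisymm (le_min huP.2 (hma huP.1.1)) ?_
    rcases eq_or_lt_of_le huP.1.1 with h0 | h0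
    · rw [← h0]; exact min_le_right _ _
    · refine le_trans (min_le_left c B) ?_
      have hgt : ∀ s ∈ Set.Ioo (0:ℝ) (sInf P), c ≤ m s := by
        intro s hs
        by_contra h
        push_neg at h
        have : sInf P ≤ s := csInf_le hPbdd ⟨⟨hs.1.le, hs.2.le.trans huP.1.2⟩, h.le⟩
        linarith [hs.2]
      have htend : Tendsto m (nhdsWithin (sInf P) (Set.Iio (sInf P))) (nhds (m (sInf P))) :=
        (hmc.tendsto (sInf P)).mono_left nhdsWithin_le_nhds
      exact ge_of_tendsto htend
        (eventually_of_mem (Ioo_mem_nhdsLT_of_mem ⟨h0, le_rfl⟩) hgt)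
  rcases lt_or_ge b A with hbA | hbA
  · have hempty : m ⁻¹' Set.Ioc a b ∩ Set.Ioc 0 t = ∅ := by
      rw [Set.eq_empty_iff_forall_notMem]
      rintro s ⟨hs1, hs2⟩
      have : A ≤ m s := hma hs2.2
      exact absurd hs1.2 (by simp only [not_le]; linarith)
    rw [hempty, measure_empty, Set.Ioc_inter_Ioc, Real.volume_Ioc]
    symm
    rw [ENNReal.ofReal_eq_zero]
    have := min_le_left b B
    have := le_max_right a A
    linarith
  obtain ⟨u, hu, hmu, hiffu⟩ := hPgen b hbA
  rcases lt_or_ge a A with haA | haA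
  · have hS1 : m ⁻¹' Set.Ioc a b ∩ Set.Ioc 0 t ⊆ Set.Icc u t :=
      fun s ⟨hs1, hs2⟩ => ⟨(hiffu s ⟨hs2.1.le, hs2.2⟩).1 hs1.2, hs2.2⟩
    have hS2 : Set.Ioo u t ⊆ m ⁻¹' Set.Ioc a b ∩ Set.Ioc 0 t := by
      intro s hs
      have hsIcc : s ∈ Set.Icc (0:ℝ) t := ⟨hu.1.trans hs.1.le, hs.2.le⟩
      have h1 : m s ≤ b := (hiffu s hsIcc).2 hs.1.le
      have h2 : A ≤ m s := hma hs.2.le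
      exact ⟨⟨by linarith, h1⟩, ⟨lt_of_le_of_lt hu.1 hs.1, hs.2.le⟩⟩
    rw [hsand u t _ hu.2 hS2 hS1, Set.Ioc_inter_Ioc, Real.volume_Ioc, hmu,
      max_eq_right haA.le]
  · obtain ⟨v, hv, hmv, hiffv⟩ := hPgen a haA
    have huv : u ≤ v := (hiffu v hv).1 (by rw [hmv]; exact (min_le_left a B).trans hab.le)
    have hS1 : m ⁻¹' Set.Ioc a b ∩ Set.Ioc 0 t ⊆ Set.Icc u v := by
      rintro s ⟨hs1, hs2⟩
      have hsIcc : s ∈ Set.Icc (0:ℝ) t := ⟨hs2.1.le, hs2.2⟩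
      refine ⟨(hiffu s hsIcc).1 hs1.2, ?_⟩
      by_contra h
      push_neg at h
      exact absurd ((hiffv s hsIcc).2 h.le) (not_le.2 hs1.1)
    have hS2 : Set.Ioo u v ⊆ m ⁻¹' Set.Ioc a b ∩ Set.Ioc 0 t := by
      intro s hs
      have hsIcc : s ∈ Set.Icc (0:ℝ) t := ⟨hu.1.trans hs.1.le, hs.2.le.trans hv.2⟩
      have h1 : m s ≤ b := (hiffu s hsIcc).2 hs.1.le
      have h2 : a < m s := by
        by_contra h
        push_neg at h
        exact absurd ((hiffv s hsIcc).1 h) (not_le.2 hs.2)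
      exact ⟨⟨h2, h1⟩, ⟨lt_of_le_of_lt hu.1 hs.1, hs.2.le.trans hv.2⟩⟩
    rw [hsand u v _ huv hS2 hS1, Set.Ioc_inter_Ioc, Real.volume_Ioc, hmu, hmv,
      max_eq_left haA]
    rcases le_total a B with haB | haB
    · rw [min_eq_left haB]
    · rw [min_eq_right haB, ENNReal.ofReal_of_nonpos (by linarith [min_le_right b B]),
        ENNReal.ofReal_of_nonpos (by linarith [min_le_right b B])]

lemma log_le_neg_one (r : ℝ) (hr : 0 < r) {x : ℝ} (hx : 0 < x)
    (hx2 : x ≤ 1 / (r * Real.exp 1)) : Real.log (r * x) ≤ -1 := by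
  have h1 : 0 < r * x := mul_pos hr hx
  rw [Real.log_le_iff_le_exp h1]
  have h3 : r * (1 / (r * Real.exp 1)) = Real.exp (-1) := by
    rw [Real.exp_neg]
    field_simp
  calc r * x ≤ r * (1 / (r * Real.exp 1)) := mul_le_mul_of_nonneg_left hx2 hr.le
    _ = Real.exp (-1) := h3

lemma bound_aux {y : ℝ} (hy : y ≤ -1) : 1 + y⁻¹ ∈ Set.Icc (0:ℝ) 1 := by
  have hy0 : y < 0 := by linarith
  have h1 : -1 ≤ y⁻¹ := by
    rw [neg_le, ← inv_neg]
    exact inv_le_one_of_one_le₀ (by linarith)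
  have h2 : y⁻¹ < 0 := inv_lt_zero.2 hy0
  exact ⟨by linarith, by linarith⟩

lemma loginv_integrable (r : ℝ) (hr : 0 < r) {c d : ℝ} (hc : 0 ≤ c) (hcd : c ≤ d)
    (hd : d ≤ 1 / (r * Real.exp 1)) :
    IntervalIntegrable (fun u => (Real.log (r * u))⁻¹) volume c d := by
  rw [intervalIntegrable_iff_integrableOn_Ioc_of_le hcd]
  have hmeas : Measurable (fun u : ℝ => (Real.log (r * u))⁻¹) :=
    (Real.measurable_log.comp (measurable_const_mul r)).inv
  refine Integrable.mono' (g := fun _ => (1:ℝ))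
    (integrableOn_const measure_Ioc_lt_top.ne) hmeas.aestronglyMeasurable ?_
  rw [ae_restrict_iff' measurableSet_Ioc]
  refine ae_of_all _ (fun u hu => ?_)
  have h2 : Real.log (r * u) ≤ -1 :=
    log_le_neg_one r hr (lt_of_le_of_lt hc hu.1) (hu.2.trans hd)
  rw [Real.norm_eq_abs, abs_inv]
  refine inv_le_one_of_one_le₀ ?_
  rw [abs_of_nonpos (by linarith)]
  linarith

lemma lir_diff (r : ℝ) (hr : 0 < r) {A B : ℝ} (h0 : 0 ≤ A) (hAB : A ≤ B)
    (hB : B ≤ 1 / (r * Real.exp 1)) :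
    ∫ x in Set.Ioc A B, (1 + (Real.log (r * x))⁻¹) = (B - A) + (lir r B - lir r A) := by
  have hi1 : IntervalIntegrable (fun u => (Real.log (r * u))⁻¹) volume 0 A :=
    loginv_integrable r hr le_rfl h0 (hAB.trans hB)
  have hi2 : IntervalIntegrable (fun u => (Real.log (r * u))⁻¹) volume A B :=
    loginv_integrable r hr h0 hAB hB
  have hlir : lir r B - lir r A = ∫ u in A..B, (Real.log (r * u))⁻¹ := by
    simp only [lir]
    rw [← intervalIntegral.integral_add_adjacent_intervals hi1 hi2]
    ring
  rw [← intervalIntegral.integral_of_le hAB,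
    intervalIntegral.integral_add intervalIntegrable_const hi2,
    intervalIntegral.integral_const, smul_eq_mul, mul_one, hlir]

lemma lir_mono (r : ℝ) (hr : 0 < r) {x1 x2 : ℝ} (h0 : 0 < x1) (h12 : x1 ≤ x2)
    (hb : x2 ≤ 1 / (r * Real.exp 1)) : x1 + lir r x1 ≤ x2 + lir r x2 := by
  have hi1 : IntervalIntegrable (fun u => (Real.log (r * u))⁻¹) volume 0 x1 :=
    loginv_integrable r hr le_rfl h0.le (h12.trans hb)
  have hi2 : IntervalIntegrable (fun u => (Real.log (r * u))⁻¹) volume x1 x2 :=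
    loginv_integrable r hr h0.le h12 hb
  have hlir : lir r x2 - lir r x1 = ∫ u in x1..x2, (Real.log (r * u))⁻¹ := by
    simp only [lir]
    rw [← intervalIntegral.integral_add_adjacent_intervals hi1 hi2]
    ring
  have hlow := intervalIntegral.integral_mono_on h12
    (intervalIntegrable_const (c := (-1:ℝ))) hi2 (fun u hu => by
      have h := bound_aux (log_le_neg_one r hr (lt_of_lt_of_le h0 hu.1) (hu.2.trans hb))
      linarith [h.1])
  rw [intervalIntegral.integral_const, smul_eq_mul] at hlow
  linarith

/-- Evaluation of the Gamma functional of Example 6.4: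
`∫_{(0,t]} (1 + 1/log(r m(s))) d(−m)(s) = (m(0) − m(t)) + (li_r(m(0)) − li_r(m(t)))`,
the integrand lies in `[0, 1]`, and `t ↦ (m(t) − m(0)) + (li_r(m(t)) − li_r(m(0)))`
is nonincreasing. -/
theorem gamma_functional_iterated_entropy
    (r T : ℝ) (hr : 0 < r) (hT : 0 < T)
    (f : ℝ → ℝ) (hf : Continuous f)
    (hf_mem : ∀ t ∈ Set.Icc (0:ℝ) T, f t ∈ Set.Ioc (0:ℝ) (1 / (r * Real.exp 1)))
    (μm : Measure ℝ)
    (hμm : ∀ a b : ℝ, a ≤ b →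
      μm (Set.Ioc a b) = ENNReal.ofReal ((-(runMin f T b)) - (-(runMin f T a)))) :
    (∀ t ∈ Set.Icc (0:ℝ) T,
      ∫ s in Set.Ioc (0:ℝ) t, (1 + (Real.log (r * runMin f T s))⁻¹) ∂μm
        = (runMin f T 0 - runMin f T t) + (lir r (runMin f T 0) - lir r (runMin f T t))) ∧
    (∀ s : ℝ, 1 + (Real.log (r * runMin f T s))⁻¹ ∈ Set.Icc (0:ℝ) 1) ∧
    AntitoneOn (fun t => (runMin f T t - runMin f T 0)
      + (lir r (runMin f T t) - lir r (runMin f T 0))) (Set.Icc (0:ℝ) T) := by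
  set m := runMin f T with hm
  have hT' : (0:ℝ) ≤ T := hT.le
  have hmc : Continuous m := runMin_cont f hf T hT'
  have hma : Antitone m := runMin_anti f hf T
  have hmem : ∀ s : ℝ, m s ∈ Set.Ioc (0:ℝ) (1 / (r * Real.exp 1)) := by
    intro s
    obtain ⟨x, hx, hx2⟩ := runMin_attained f hf T hT' s
    rw [hm, hx2]
    exact hf_mem x hx
  have hμ' : ∀ a b : ℝ, a ≤ b → μm (Set.Ioc a b) = ENNReal.ofReal (m a - m b) := by
    intro a b h
    rw [hμm a b h]
    ring_nf
  have hbound : ∀ s : ℝ, 1 + (Real.log (r * m s))⁻¹ ∈ Set.Icc (0:ℝ) 1 :=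
    fun s => bound_aux (log_le_neg_one r hr (hmem s).1 (hmem s).2)
  refine ⟨?_, hbound, ?_⟩
  · intro t ht
    have hmap := map_runMin m hmc hma μm hμ' ht.1
    have hφ : Measurable (fun x : ℝ => 1 + (Real.log (r * x))⁻¹) :=
      measurable_const.add ((Real.measurable_log.comp (measurable_const_mul r)).inv)
    calc ∫ s in Set.Ioc (0:ℝ) t, (1 + (Real.log (r * m s))⁻¹) ∂μm
        = ∫ x, (1 + (Real.log (r * x))⁻¹) ∂(Measure.map m (μm.restrict (Set.Ioc 0 t))) :=
          (integral_map hmc.aemeasurable hφ.aestronglyMeasurable).symm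
      _ = ∫ x in Set.Ioc (m t) (m 0), (1 + (Real.log (r * x))⁻¹) := by rw [hmap]
      _ = (m 0 - m t) + (lir r (m 0) - lir r (m t)) :=
          lir_diff r hr (hmem t).1.le (hma ht.1) (hmem 0).2
  · intro t1 h1 t2 h2 h12
    simp only
    have hx : m t2 ≤ m t1 := hma h12
    have := lir_mono r hr (hmem t2).1 hx (hmem t1).2
    linarith
end
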